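/- arXiv:2306.14648 — 4 statements merged into one kernel-verified Lean document; each statement's English description precedes it below -/
import Mathlib

section
/- Let T be an n-vertex oriented tree with a valid edge ordering e_1, ..., e_{n-1}, let i ∈ [n-2], and let T_0 = {e_1, ..., e_{n-1-i}} be a subtree of T on n - i vertices. Let D be an n-vertex digraph and φ_0 an embedding of T_0 into D. Suppose there exists a family S of vertex-disjoint stars in T_0 such that for all u, w ∈ V(D) and * ∈ {+, -}, the number of stars in S that are (u,*,w)-absorbing under φ_0 is at least 2i. Then there exists an embedding of T into D. -/
/-- Vertex set spanned by the first `t` edges of an edge sequence. -/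
def Vset {VT : Type*} {N : ℕ} (e : Fin N → VT × VT) (t : ℕ) : Set VT :=
  {v | ∃ j : Fin N, (j : ℕ) < t ∧ ((e j).1 = v ∨ (e j).2 = v)}



/-- The Absorbing Lemma: if the partial embedding `φ₀` of the subtree `T₀` (consisting of the
first `n-1-i` edges in a valid ordering of the `n`-vertex oriented tree `T`) admits, for every
pair of vertices `u, w` of the `n`-vertex digraph `D` and every direction, at least `2i`
absorbing stars from a vertex-disjoint family of stars of `T₀`, then `T` embeds into `D`. -/
theorem stmt_3 {VT VD : Type*} [Fintype VT] [Fintype VD]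
    (n i : ℕ) (hVT : Fintype.card VT = n) (hVD : Fintype.card VD = n)
    (hi1 : 1 ≤ i) (hi2 : i ≤ n - 2)
    (T : VT → VT → Prop) (hloop : ∀ a, ¬ T a a) (horient : ∀ a b, T a b → ¬ T b a)
    (htree : (SimpleGraph.fromRel T).IsTree)
    (e : Fin (n - 1) → VT × VT)
    (heinj : Function.Injective e)
    (heT : ∀ j, T (e j).1 (e j).2)
    (hesurj : ∀ a b, T a b → ∃ j, e j = (a, b))
    (hvalid : ∀ j : Fin (n - 1), ∀ h : (j : ℕ) + 1 < n - 1,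
      ({v : VT | ∃ k : Fin (n - 1), k ≤ j ∧ ((e k).1 = v ∨ (e k).2 = v)} ∩
        {(e ⟨(j : ℕ) + 1, h⟩).1, (e ⟨(j : ℕ) + 1, h⟩).2}).ncard = 1)
    (T₀ : VT → VT → Prop)
    (hT₀ : ∀ a b, T₀ a b ↔ ∃ j : Fin (n - 1), (j : ℕ) < n - 1 - i ∧ e j = (a, b))
    (V₀ : Set VT)
    (hV₀ : V₀ = {v | ∃ j : Fin (n - 1), (j : ℕ) < n - 1 - i ∧ ((e j).1 = v ∨ (e j).2 = v)})
    (hV₀card : V₀.ncard = n - i)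
    (D : VD → VD → Prop)
    (φ₀ : VT → VD)
    (hφinj : Set.InjOn φ₀ V₀)
    (hφedge : ∀ a b, T₀ a b → D (φ₀ a) (φ₀ b))
    (C : Set VT) (hCV : C ⊆ V₀)
    (hdisj : C.Pairwise fun v w =>
      Disjoint ({v} ∪ {u | T₀ v u} ∪ {u | T₀ u v})
               ({w} ∪ {u | T₀ w u} ∪ {u | T₀ u w}))
    (habsP : ∀ u w : VD, 2 * i ≤
      {v ∈ C | D u (φ₀ v) ∧ (∀ x, T₀ v x → D w (φ₀ x)) ∧ (∀ x, T₀ x v → D (φ₀ x) w)}.ncard)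
    (habsM : ∀ u w : VD, 2 * i ≤
      {v ∈ C | D (φ₀ v) u ∧ (∀ x, T₀ v x → D w (φ₀ x)) ∧ (∀ x, T₀ x v → D (φ₀ x) w)}.ncard) :
    ∃ φ : VT → VD, Function.Injective φ ∧ ∀ a b, T a b → D (φ a) (φ b) := by
  classical
  have hn3 : 3 ≤ n := by omega
  set m : ℕ := n - 1 - i with hm
  have hm1 : 1 ≤ m := by omega
  have hmi : m + i = n - 1 := by omega
  have hV0eq : V₀ = Vset e m := by rw [hV₀]; rfl
  have hVmono : ∀ t t' : ℕ, t ≤ t' → Vset e t ⊆ Vset e t' := by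
    rintro t t' htt v ⟨j', hj', hv⟩
    exact ⟨j', lt_of_lt_of_le hj' htt, hv⟩
  have hT₀sub : ∀ a b, T₀ a b → T a b := by
    intro a b h
    obtain ⟨j, _, hj⟩ := (hT₀ a b).mp h
    have := heT j; rw [hj] at this; exact this
  have hT₀V : ∀ a b, T₀ a b → a ∈ V₀ ∧ b ∈ V₀ := by
    intro a b h
    obtain ⟨j, hjm, hj⟩ := (hT₀ a b).mp h
    rw [hV₀]
    exact ⟨⟨j, hjm, Or.inl (by rw [hj])⟩, ⟨j, hjm, Or.inr (by rw [hj])⟩⟩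
  have hnbC : ∀ c, c ∈ C → ∀ x, (T₀ c x ∨ T₀ x c) → x ∉ C := by
    intro c hc x hx hxC
    have hxc : x ≠ c := by
      rintro rfl
      rcases hx with h | h <;> exact hloop _ (hT₀sub _ _ h)
    have hd := hdisj hxC hc hxc
    have hx1 : x ∈ ({x} ∪ {u | T₀ x u} ∪ {u | T₀ u x} : Set VT) :=
      Or.inl (Or.inl rfl)
    have hx2 : x ∈ ({c} ∪ {u | T₀ c u} ∪ {u | T₀ u c} : Set VT) := by
      rcases hx with h | h
      · exact Or.inl (Or.inr h)
      · exact Or.inr h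
    exact Set.disjoint_left.mp hd hx1 hx2
  have key : ∀ k : ℕ, k ≤ i → ∃ (φ : VT → VD) (B : Set VT), B ⊆ C ∧ B.ncard ≤ 2 * k ∧
      Set.InjOn φ (Vset e (m + k)) ∧
      (∀ j : Fin (n - 1), (j : ℕ) < m + k → D (φ (e j).1) (φ (e j).2)) ∧
      (∀ v ∈ V₀, v ∉ B → φ v = φ₀ v) ∧
      (∀ j : Fin (n - 1), m ≤ (j : ℕ) → (j : ℕ) < m + k →
        ((e j).1 ∈ C → (e j).1 ∈ B) ∧ ((e j).2 ∈ C → (e j).2 ∈ B)) ∧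
      (Vset e (m + k)).ncard = (n - i) + k := by
    intro k
    induction k with
    | zero =>
      intro _
      refine ⟨φ₀, ∅, Set.empty_subset _, by simp, ?_, ?_, ?_, ?_, ?_⟩
      · show Set.InjOn φ₀ (Vset e m)
        rw [← hV0eq]; exact hφinj
      · intro j hj
        exact hφedge _ _ ((hT₀ _ _).mpr ⟨j, by omega, rfl⟩)
      · intro v _ _; rfl
      · intro j h1 h2; omega
      · show (Vset e m).ncard = n - i + 0
        rw [← hV0eq]; simpa using hV₀card
    | succ k ih =>
      intro hk
      obtain ⟨φ, B, hBC, hBcard, hinj, hedge, hagree, hburn, hcard⟩ := ih (by omega)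
      have hjlt : m + k < n - 1 := by omega
      set j : Fin (n - 1) := ⟨m + k, hjlt⟩ with hjdef
      have hjval : (j : ℕ) = m + k := rfl
      have hab : (e j).1 ≠ (e j).2 := by
        intro h; exact hloop _ (h ▸ heT j)
      have hedgene : ∀ j' : Fin (n - 1), (e j').1 ≠ (e j').2 := by
        intro j' h; exact hloop _ (h ▸ heT j')
      have hmemS : ∀ jj : Fin (n - 1), (jj : ℕ) < m + k →
          (e jj).1 ∈ Vset e (m + k) ∧ (e jj).2 ∈ Vset e (m + k) := by
        intro jj h
        exact ⟨⟨jj, h, Or.inl rfl⟩, ⟨jj, h, Or.inr rfl⟩⟩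
      -- exactly one endpoint of the new edge is old
      have hone : ((e j).1 ∈ Vset e (m + k) ∧ (e j).2 ∉ Vset e (m + k)) ∨
          ((e j).2 ∈ Vset e (m + k) ∧ (e j).1 ∉ Vset e (m + k)) := by
        have h1 : m + k - 1 < n - 1 := by omega
        have h2 : ((⟨m + k - 1, h1⟩ : Fin (n - 1)) : ℕ) + 1 < n - 1 := by
          show m + k - 1 + 1 < n - 1; omega
        have hv := hvalid ⟨m + k - 1, h1⟩ h2
        have hidx : (⟨((⟨m + k - 1, h1⟩ : Fin (n - 1)) : ℕ) + 1, h2⟩ : Fin (n - 1)) = j := by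
          apply Fin.ext; show m + k - 1 + 1 = m + k; omega
        rw [hidx] at hv
        have hset : {v : VT | ∃ k' : Fin (n - 1), k' ≤ (⟨m + k - 1, h1⟩ : Fin (n - 1)) ∧
            ((e k').1 = v ∨ (e k').2 = v)} = Vset e (m + k) := by
          ext v
          simp only [Set.mem_setOf_eq, Fin.le_def, Vset]
          constructor
          · rintro ⟨k', hk', h⟩; exact ⟨k', by omega, h⟩
          · rintro ⟨k', hk', h⟩; exact ⟨k', by omega, h⟩
        rw [hset] at hv
        by_cases h1m : (e j).1 ∈ Vset e (m + k) <;>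
          by_cases h2m : (e j).2 ∈ Vset e (m + k)
        · exfalso
          have hsub : {(e j).1, (e j).2} ⊆ Vset e (m + k) ∩ {(e j).1, (e j).2} := by
            intro x hx
            rcases hx with rfl | hx
            · exact ⟨h1m, Or.inl rfl⟩
            · rcases hx with rfl
              exact ⟨h2m, Or.inr rfl⟩
          have hle := Set.ncard_le_ncard hsub (Set.toFinite _)
          rw [hv, Set.ncard_pair hab] at hle
          omega
        · exact Or.inl ⟨h1m, h2m⟩
        · exact Or.inr ⟨h2m, h1m⟩
        · exfalso
          have : Vset e (m + k) ∩ {(e j).1, (e j).2} = ∅ := by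
            ext x
            simp only [Set.mem_inter_iff, Set.mem_insert_iff, Set.mem_singleton_iff,
              Set.mem_empty_iff_false, iff_false, not_and]
            rintro hx (rfl | rfl)
            · exact h1m hx
            · exact h2m hx
          rw [this] at hv; simp at hv
      -- fresh vertex
      obtain ⟨w, hwS⟩ : ∃ w : VD, w ∉ φ '' Vset e (m + k) := by
        by_contra hcon
        push_neg at hcon
        have huniv : φ '' Vset e (m + k) = Set.univ := Set.eq_univ_of_forall hcon
        have h1 := Set.ncard_image_le (s := Vset e (m + k)) (f := φ) (Set.toFinite _)
        rw [huniv, hcard] at h1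
        rw [Set.ncard_univ, Nat.card_eq_fintype_card, hVD] at h1
        omega
      obtain ⟨p, ν, hpS, hνS, hor⟩ : ∃ p ν : VT, p ∈ Vset e (m + k) ∧ ν ∉ Vset e (m + k) ∧
          (((e j).1 = p ∧ (e j).2 = ν) ∨ ((e j).1 = ν ∧ (e j).2 = p)) := by
        rcases hone with ⟨ha, hb⟩ | ⟨ha, hb⟩
        · exact ⟨_, _, ha, hb, Or.inl ⟨rfl, rfl⟩⟩
        · exact ⟨_, _, ha, hb, Or.inr ⟨rfl, rfl⟩⟩
      have hpν : p ≠ ν := fun hEq => hνS (hEq ▸ hpS)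
      -- pick an absorbing star center
      obtain ⟨c, hcC, hcBp, hs1, hs2, hDnew1, hDnew2⟩ :
          ∃ c, c ∈ C ∧ c ∉ insert p B ∧
            (∀ x, T₀ c x → D w (φ₀ x)) ∧ (∀ x, T₀ x c → D (φ₀ x) w) ∧
            (((e j).1 = p ∧ (e j).2 = ν) → D (φ p) (φ₀ c)) ∧
            (((e j).1 = ν ∧ (e j).2 = p) → D (φ₀ c) (φ p)) := by
        rcases hor with ⟨h1, h2⟩ | ⟨h1, h2⟩
        · have hA := habsP (φ p) w
          have hns : ¬ ({v ∈ C | D (φ p) (φ₀ v) ∧ (∀ x, T₀ v x → D w (φ₀ x)) ∧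
              (∀ x, T₀ x v → D (φ₀ x) w)} ⊆ insert p B) := by
            intro hsub
            have h3 := Set.ncard_le_ncard hsub (Set.toFinite _)
            have h4 := Set.ncard_insert_le p B
            omega
          obtain ⟨c, hcA, hcB⟩ := Set.not_subset.mp hns
          obtain ⟨hcC, hD, hx1, hx2⟩ := hcA
          exact ⟨c, hcC, hcB, hx1, hx2, fun _ => hD,
            fun h => absurd (h1.symm.trans h.1) hpν⟩
        · have hA := habsM (φ p) w
          have hns : ¬ ({v ∈ C | D (φ₀ v) (φ p) ∧ (∀ x, T₀ v x → D w (φ₀ x)) ∧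
              (∀ x, T₀ x v → D (φ₀ x) w)} ⊆ insert p B) := by
            intro hsub
            have h3 := Set.ncard_le_ncard hsub (Set.toFinite _)
            have h4 := Set.ncard_insert_le p B
            omega
          obtain ⟨c, hcA, hcB⟩ := Set.not_subset.mp hns
          obtain ⟨hcC, hD, hx1, hx2⟩ := hcA
          exact ⟨c, hcC, hcB, hx1, hx2,
            fun h => absurd (h1.symm.trans h.1) (Ne.symm hpν), fun _ => hD⟩
      have hcB : c ∉ B := fun h => hcBp (Set.mem_insert_iff.mpr (Or.inr h))
      have hcp : c ≠ p := fun h => hcBp (h ▸ Set.mem_insert _ _)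
      have hcV₀ : c ∈ V₀ := hCV hcC
      have hcS : c ∈ Vset e (m + k) := hVmono m (m + k) (by omega) (hV0eq ▸ hcV₀)
      have hφc : φ c = φ₀ c := hagree c hcV₀ hcB
      have hcν : c ≠ ν := fun h => hνS (h ▸ hcS)
      have hνV₀ : ν ∉ V₀ := fun h => hνS (hVmono m (m + k) (by omega) (hV0eq ▸ h))
      have hνC : ν ∉ C := fun h => hνV₀ (hCV h)
      set φ' : VT → VD := fun x => if x = c then w else if x = ν then φ₀ c else φ x with hφ'def
      have hφ'c : φ' c = w := by simp [hφ'def]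
      have hφ'ν : φ' ν = φ₀ c := by simp [hφ'def, Ne.symm hcν]
      have hφ'other : ∀ x, x ≠ c → x ≠ ν → φ' x = φ x := by
        intro x h1 h2; simp [hφ'def, h1, h2]
      have himg : ∀ x ∈ Vset e (m + k), x ≠ c → φ x ≠ φ₀ c := by
        intro x hx hxc hEq
        exact hxc (hinj hx hcS (hEq.trans hφc.symm))
      have hφnw : ∀ x ∈ Vset e (m + k), φ x ≠ w := fun x hx h => hwS ⟨x, hx, h⟩
      have hVsucc : Vset e (m + (k + 1)) = insert ν (Vset e (m + k)) := by
        ext v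
        simp only [Vset, Set.mem_setOf_eq, Set.mem_insert_iff]
        constructor
        · rintro ⟨j', hj', hv⟩
          by_cases hlt : (j' : ℕ) < m + k
          · right; exact ⟨j', hlt, hv⟩
          · have hj'j : j' = j := Fin.ext (by omega)
            subst hj'j
            rcases hor with ⟨h1, h2⟩ | ⟨h1, h2⟩ <;> rcases hv with h | h
            · right; rw [← h, h1]; exact hpS
            · left; rw [← h, h2]
            · left; rw [← h, h1]
            · right; rw [← h, h2]; exact hpS
        · rintro (rfl | ⟨j', hj', hv⟩)
          · refine ⟨j, by omega, ?_⟩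
            rcases hor with ⟨h1, h2⟩ | ⟨h1, h2⟩
            · exact Or.inr h2
            · exact Or.inl h1
          · exact ⟨j', by omega, hv⟩
      refine ⟨φ', insert c (B ∪ ({(e j).1, (e j).2} ∩ C)), ?_, ?_, ?_, ?_, ?_, ?_, ?_⟩
      · -- B' ⊆ C
        intro x hx
        rcases hx with rfl | hx
        · exact hcC
        · rcases hx with hx | hx
          · exact hBC hx
          · exact hx.2
      · -- cardinality of B'
        have hsub : insert c (B ∪ ({(e j).1, (e j).2} ∩ C)) ⊆ insert c (insert p B) := by
          intro x hx
          rcases hx with rfl | hx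
          · exact Set.mem_insert _ _
          · rcases hx with hx | ⟨hx1, hx2⟩
            · exact Or.inr (Or.inr hx)
            · have hxp : x = p := by
                rcases Set.mem_insert_iff.mp hx1 with h | h
                · rcases hor with ⟨h1, _⟩ | ⟨h1, _⟩
                  · exact h.trans h1
                  · exfalso; apply hνC; rw [← h1, ← h]; exact hx2
                · rw [Set.mem_singleton_iff] at h
                  rcases hor with ⟨_, h2⟩ | ⟨_, h2⟩
                  · exfalso; apply hνC; rw [← h2, ← h]; exact hx2
                  · exact h.trans h2
              rw [hxp]
              exact Or.inr (Set.mem_insert _ _)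
        have h1 := Set.ncard_le_ncard hsub (Set.toFinite _)
        have h2 := Set.ncard_insert_le c (insert p B)
        have h3 := Set.ncard_insert_le p B
        omega
      · -- injectivity
        rw [hVsucc]
        rintro x hx y hy hxy
        rcases Set.mem_insert_iff.mp hx with hxν | hxS <;>
          rcases Set.mem_insert_iff.mp hy with hyν | hyS
        · rw [hxν, hyν]
        · rw [hxν, hφ'ν] at hxy
          by_cases hyc : y = c
          · rw [hyc, hφ'c] at hxy
            exact absurd ⟨c, hcS, hφc.trans hxy⟩ hwS
          · have hyν' : y ≠ ν := fun h => hνS (h ▸ hyS)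
            rw [hφ'other y hyc hyν'] at hxy
            exact absurd hxy.symm (himg y hyS hyc)
        · rw [hyν, hφ'ν] at hxy
          by_cases hxc : x = c
          · rw [hxc, hφ'c] at hxy
            exact absurd ⟨c, hcS, hφc.trans hxy.symm⟩ hwS
          · have hxν' : x ≠ ν := fun h => hνS (h ▸ hxS)
            rw [hφ'other x hxc hxν'] at hxy
            exact absurd hxy (himg x hxS hxc)
        · have hxν' : x ≠ ν := fun h => hνS (h ▸ hxS)
          have hyν' : y ≠ ν := fun h => hνS (h ▸ hyS)
          by_cases hxc : x = c <;> by_cases hyc : y = c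
          · rw [hxc, hyc]
          · rw [hxc, hφ'c, hφ'other y hyc hyν'] at hxy
            exact absurd hxy.symm (hφnw y hyS)
          · rw [hyc, hφ'c, hφ'other x hxc hxν'] at hxy
            exact absurd hxy (hφnw x hxS)
          · rw [hφ'other x hxc hxν', hφ'other y hyc hyν'] at hxy
            exact hinj hxS hyS hxy
      · -- edges
        intro j' hj'
        by_cases hlt : (j' : ℕ) < m + k
        · obtain ⟨hx1S, hx2S⟩ := hmemS j' hlt
          have hx1ν : (e j').1 ≠ ν := fun h => hνS (h ▸ hx1S)
          have hx2ν : (e j').2 ≠ ν := fun h => hνS (h ▸ hx2S)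
          by_cases hxc : (e j').1 = c <;> by_cases hyc : (e j').2 = c
          · exact absurd (hxc.trans hyc.symm) (hedgene j')
          · have hjm : (j' : ℕ) < m := by
              by_contra hcon
              push_neg at hcon
              have := (hburn j' hcon hlt).1 (by rw [hxc]; exact hcC)
              rw [hxc] at this
              exact hcB this
            have hT₀cy : T₀ c (e j').2 := (hT₀ _ _).mpr ⟨j', hjm, by rw [← hxc]⟩
            have hyV₀ : (e j').2 ∈ V₀ := (hT₀V _ _ hT₀cy).2
            have hynC : (e j').2 ∉ C := hnbC c hcC _ (Or.inl hT₀cy)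
            rw [hxc, hφ'c, hφ'other _ hyc hx2ν,
              hagree _ hyV₀ (fun hB => hynC (hBC hB))]
            exact hs1 _ hT₀cy
          · have hjm : (j' : ℕ) < m := by
              by_contra hcon
              push_neg at hcon
              have := (hburn j' hcon hlt).2 (by rw [hyc]; exact hcC)
              rw [hyc] at this
              exact hcB this
            have hT₀xc : T₀ (e j').1 c := (hT₀ _ _).mpr ⟨j', hjm, by rw [← hyc]⟩
            have hxV₀ : (e j').1 ∈ V₀ := (hT₀V _ _ hT₀xc).1
            have hxnC : (e j').1 ∉ C := hnbC c hcC _ (Or.inr hT₀xc)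
            rw [hyc, hφ'c, hφ'other _ hxc hx1ν,
              hagree _ hxV₀ (fun hB => hxnC (hBC hB))]
            exact hs2 _ hT₀xc
          · rw [hφ'other _ hxc hx1ν, hφ'other _ hyc hx2ν]
            exact hedge j' hlt
        · have hj'j : j' = j := Fin.ext (by omega)
          subst hj'j
          rcases hor with ⟨h1, h2⟩ | ⟨h1, h2⟩
          · rw [h1, h2, hφ'ν, hφ'other p (Ne.symm hcp) hpν]
            exact hDnew1 ⟨h1, h2⟩
          · rw [h1, h2, hφ'ν, hφ'other p (Ne.symm hcp) hpν]
            exact hDnew2 ⟨h1, h2⟩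
      · -- agreement
        intro v hv hvB'
        have hvc : v ≠ c := fun h => hvB' (h ▸ Set.mem_insert _ _)
        have hvν : v ≠ ν := fun h => hνV₀ (h ▸ hv)
        rw [hφ'other v hvc hvν]
        exact hagree v hv (fun h => hvB' (Or.inr (Or.inl h)))
      · -- burn
        intro j' hmle hj'
        by_cases hlt : (j' : ℕ) < m + k
        · obtain ⟨hb1, hb2⟩ := hburn j' hmle hlt
          exact ⟨fun h => Or.inr (Or.inl (hb1 h)), fun h => Or.inr (Or.inl (hb2 h))⟩
        · have hj'j : j' = j := Fin.ext (by omega)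
          subst hj'j
          exact ⟨fun h => Or.inr (Or.inr ⟨Or.inl rfl, h⟩),
            fun h => Or.inr (Or.inr ⟨Or.inr rfl, h⟩)⟩
      · -- cardinality
        rw [hVsucc, Set.ncard_insert_of_notMem hνS (Set.toFinite _), hcard]
        omega
  -- conclude
  obtain ⟨φ, B, _, _, hinj, hedge, _, _, hcard⟩ := key i le_rfl
  have hVuniv : Vset e (m + i) = Set.univ := by
    apply Set.eq_of_subset_of_ncard_le (Set.subset_univ _)
    rw [hcard, Set.ncard_univ, Nat.card_eq_fintype_card, hVT]
    omega
  refine ⟨φ, ?_, ?_⟩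
  · intro x y hxy
    exact hinj (by rw [hVuniv]; trivial) (by rw [hVuniv]; trivial) hxy
  · intro a b hab
    obtain ⟨j, hj⟩ := hesurj a b hab
    have hjlt : (j : ℕ) < m + i := by have := j.isLt; omega
    have := hedge j hjlt
    rw [hj] at this
    exact this
end

section
/- (Azuma–Hoeffding inequality) Suppose (M_t)_{t≥0} is a martingale and for all t ≥ 1 it holds that |M_t − M_{t−1}| ≤ L almost surely. Then for any positive integer N and any ε > 0, Pr[|M_N − M_0| ≥ ε] ≤ 2 exp(−ε² / (2 N L²)). -/
open MeasureTheory Real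

section Aux

variable {Ω : Type*} {m0 : MeasurableSpace Ω} {μ : Measure Ω} [IsProbabilityMeasure μ]

private lemma exp_le_cosh_add {L c x : ℝ} (hL : 0 < L) (hx : |x| ≤ L) :
    Real.exp (c * x) ≤ Real.cosh (c * L) + (x / L) * Real.sinh (c * L) := by
  have hxl : -L ≤ x := (abs_le.mp hx).1
  have hxr : x ≤ L := (abs_le.mp hx).2
  have ha : (0:ℝ) ≤ (L + x) / (2 * L) := by apply div_nonneg <;> linarith
  have hb : (0:ℝ) ≤ (L - x) / (2 * L) := by apply div_nonneg <;> linarith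
  have hab : (L + x) / (2 * L) + (L - x) / (2 * L) = 1 := by field_simp; ring
  have key := convexOn_exp.2 (Set.mem_univ (c * L)) (Set.mem_univ (-(c * L))) ha hb hab
  simp only [smul_eq_mul] at key
  have h1 : (L + x) / (2 * L) * (c * L) + (L - x) / (2 * L) * (-(c * L)) = c * x := by
    field_simp; ring
  rw [h1] at key
  refine key.trans (le_of_eq ?_)
  rw [Real.cosh_eq, Real.sinh_eq, Real.exp_neg]
  field_simp
  ring

private lemma ae_abs_le (M : ℕ → Ω → ℝ) {L : ℝ}
    (hbdd : ∀ t : ℕ, ∀ᵐ ω ∂μ, |M (t + 1) ω - M t ω| ≤ L) (n : ℕ) :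
    ∀ᵐ ω ∂μ, |M n ω - M 0 ω| ≤ n * L := by
  have h := ae_all_iff.mpr hbdd
  filter_upwards [h] with ω hω
  induction n with
  | zero => simp
  | succ n ih =>
    have : M (n+1) ω - M 0 ω = (M (n+1) ω - M n ω) + (M n ω - M 0 ω) := by ring
    rw [this]
    calc |(M (n+1) ω - M n ω) + (M n ω - M 0 ω)| ≤ |M (n+1) ω - M n ω| + |M n ω - M 0 ω| :=
          abs_add_le _ _
      _ ≤ L + n * L := add_le_add (hω n) ih
      _ = (n+1 : ℕ) * L := by push_cast; ring

private lemma mgf_bound (ℱ : Filtration ℕ m0) (M : ℕ → Ω → ℝ) (hM : Martingale M ℱ μ)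
    {L : ℝ} (hL : 0 < L)
    (hbdd : ∀ t : ℕ, ∀ᵐ ω ∂μ, |M (t + 1) ω - M t ω| ≤ L) (c : ℝ) (n : ℕ) :
    Integrable (fun ω => exp (c * (M n ω - M 0 ω))) μ ∧
    ∫ ω, exp (c * (M n ω - M 0 ω)) ∂μ ≤ exp (c ^ 2 * L ^ 2 / 2) ^ n := by
  -- strong measurability of M n - M 0 w.r.t. ℱ n
  have hsm : ∀ n : ℕ, StronglyMeasurable[ℱ n] (fun ω => exp (c * (M n ω - M 0 ω))) := by
    intro n
    exact (Real.continuous_exp.comp_stronglyMeasurable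
      (((hM.stronglyMeasurable n).sub ((hM.stronglyMeasurable 0).mono
        (ℱ.mono (Nat.zero_le n)))).const_mul c))
  have hint : ∀ n : ℕ, Integrable (fun ω => exp (c * (M n ω - M 0 ω))) μ := by
    intro n
    refine Integrable.mono' (integrable_const (exp (|c| * (n * L)))) 
      ((hsm n).mono (ℱ.le n)).aestronglyMeasurable ?_
    filter_upwards [ae_abs_le M hbdd n] with ω hω
    rw [Real.norm_eq_abs, abs_of_pos (exp_pos _), Real.exp_le_exp]
    calc c * (M n ω - M 0 ω) ≤ |c * (M n ω - M 0 ω)| := le_abs_self _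
      _ = |c| * |M n ω - M 0 ω| := abs_mul _ _
      _ ≤ |c| * (n * L) := by gcongr
  refine ⟨hint n, ?_⟩
  induction n with
  | zero => simp
  | succ n ih =>
    set f : Ω → ℝ := fun ω => exp (c * (M n ω - M 0 ω)) with hf
    set D : Ω → ℝ := fun ω => M (n+1) ω - M n ω with hD
    have hDint : Integrable D μ := (hM.integrable (n+1)).sub (hM.integrable n)
    have hfbdd : ∀ᵐ ω ∂μ, ‖f ω‖ ≤ exp (|c| * (n * L)) := by
      filter_upwards [ae_abs_le M hbdd n] with ω hω
      rw [Real.norm_eq_abs, abs_of_pos (exp_pos _), Real.exp_le_exp]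
      calc c * (M n ω - M 0 ω) ≤ |c| * |M n ω - M 0 ω| :=
            (le_abs_self _).trans (abs_mul _ _).le
        _ ≤ |c| * (n * L) := by gcongr
    have hfDint : Integrable (f * D) μ :=
      hDint.bdd_mul ((hsm n).mono (ℱ.le n)).aestronglyMeasurable hfbdd
    -- E[f * D] = 0
    have hcond : μ[D | ℱ n] =ᵐ[μ] 0 := by
      have h1 : μ[fun ω => M (n+1) ω - M n ω | ℱ n] =ᵐ[μ]
          μ[M (n+1) | ℱ n] - μ[M n | ℱ n] := condExp_sub (hM.integrable (n+1)) (hM.integrable n) _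
      have h2 : μ[M (n+1) | ℱ n] =ᵐ[μ] M n := hM.condExp_ae_eq (Nat.le_succ n)
      have h3 : μ[M n | ℱ n] =ᵐ[μ] M n := hM.condExp_ae_eq le_rfl
      filter_upwards [h1, h2, h3] with ω e1 e2 e3
      simp only [hD, Pi.zero_apply]
      rw [e1]
      simp [e2, e3]
    have hzero : ∫ ω, f ω * D ω ∂μ = 0 := by
      have hpull : μ[f * D | ℱ n] =ᵐ[μ] f * μ[D | ℱ n] :=
        condExp_mul_of_stronglyMeasurable_left (hsm n) hfDint hDint
      have : ∫ ω, (μ[f * D | ℱ n]) ω ∂μ = ∫ ω, f ω * D ω ∂μ :=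
        integral_condExp (μ := μ) (f := f * D) (ℱ.le n)
      rw [← this]
      rw [integral_congr_ae (hpull.trans ?_), integral_zero]
      filter_upwards [hcond] with ω hω
      simp [hω]
    -- pointwise bound
    have hpt : ∀ᵐ ω ∂μ, exp (c * (M (n+1) ω - M 0 ω)) ≤
        f ω * (Real.cosh (c * L) + (D ω / L) * Real.sinh (c * L)) := by
      filter_upwards [hbdd n] with ω hω
      have : c * (M (n+1) ω - M 0 ω) = c * (M n ω - M 0 ω) + c * D ω := by
        simp only [hD]; ring
      rw [this, Real.exp_add]
      exact mul_le_mul_of_nonneg_left (exp_le_cosh_add hL hω) (exp_pos _).le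
    have hgint : Integrable (fun ω => f ω * (Real.cosh (c * L) + (D ω / L) * Real.sinh (c * L))) μ := by
      have : (fun ω => f ω * (Real.cosh (c * L) + (D ω / L) * Real.sinh (c * L)))
          = fun ω => Real.cosh (c * L) * f ω + (Real.sinh (c * L) / L) * (f ω * D ω) := by
        funext ω; ring
      rw [this]
      exact ((hint n).const_mul _).add (hfDint.const_mul _)
    have step : ∫ ω, exp (c * (M (n+1) ω - M 0 ω)) ∂μ ≤
        Real.cosh (c * L) * ∫ ω, f ω ∂μ := by
      calc ∫ ω, exp (c * (M (n+1) ω - M 0 ω)) ∂μ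
          ≤ ∫ ω, f ω * (Real.cosh (c * L) + (D ω / L) * Real.sinh (c * L)) ∂μ :=
            integral_mono_ae (hint (n+1)) hgint hpt
        _ = Real.cosh (c * L) * ∫ ω, f ω ∂μ + (Real.sinh (c * L) / L) * ∫ ω, f ω * D ω ∂μ := by
            have he : (fun ω => f ω * (Real.cosh (c * L) + (D ω / L) * Real.sinh (c * L)))
                = fun ω => Real.cosh (c * L) * f ω + (Real.sinh (c * L) / L) * (f ω * D ω) := by
              funext ω; ring
            have i1 : Integrable (fun ω => Real.cosh (c * L) * f ω) μ := (hint n).const_mul _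
            have i2 : Integrable (fun ω => Real.sinh (c * L) / L * (f ω * D ω)) μ :=
              hfDint.const_mul _
            rw [he, integral_add i1 i2, integral_const_mul, integral_const_mul]
        _ = Real.cosh (c * L) * ∫ ω, f ω ∂μ := by rw [hzero]; ring
    have hcosh : Real.cosh (c * L) ≤ exp (c ^ 2 * L ^ 2 / 2) := by
      have := Real.cosh_le_exp_half_sq (c * L)
      rwa [mul_pow] at this
    calc ∫ ω, exp (c * (M (n+1) ω - M 0 ω)) ∂μ ≤ Real.cosh (c * L) * ∫ ω, f ω ∂μ := step
      _ ≤ exp (c ^ 2 * L ^ 2 / 2) * exp (c ^ 2 * L ^ 2 / 2) ^ n := by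
          exact mul_le_mul hcosh ih (integral_nonneg fun ω => (exp_pos _).le) (exp_pos _).le
      _ = exp (c ^ 2 * L ^ 2 / 2) ^ (n + 1) := by ring

private lemma onesided (ℱ : Filtration ℕ m0) (M : ℕ → Ω → ℝ) (hM : Martingale M ℱ μ)
    {L : ℝ} (hL : 0 < L)
    (hbdd : ∀ t : ℕ, ∀ᵐ ω ∂μ, |M (t + 1) ω - M t ω| ≤ L)
    (N : ℕ) (hN : 0 < N) (ε : ℝ) (hε : 0 < ε) :
    μ {ω | ε ≤ M N ω - M 0 ω} ≤ ENNReal.ofReal (Real.exp (-ε ^ 2 / (2 * N * L ^ 2))) := by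
  set t : ℝ := ε / (N * L ^ 2) with ht
  have hNpos : (0:ℝ) < N := by exact_mod_cast hN
  have htpos : 0 < t := by positivity
  obtain ⟨hint, hbound⟩ := mgf_bound ℱ M hM hL hbdd t N
  have hint' : Integrable (fun ω => exp (t * (M N ω - M 0 ω))) μ := hint
  have key := ProbabilityTheory.measure_ge_le_exp_mul_mgf (X := fun ω => M N ω - M 0 ω)
    (μ := μ) ε htpos.le hint'
  have hmgf : ProbabilityTheory.mgf (fun ω => M N ω - M 0 ω) μ t
      ≤ exp (t ^ 2 * L ^ 2 / 2) ^ N := hbound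
  have hfinal : exp (-t * ε) * exp (t ^ 2 * L ^ 2 / 2) ^ N
      = exp (-ε ^ 2 / (2 * N * L ^ 2)) := by
    rw [← Real.exp_nat_mul, ← Real.exp_add]
    congr 1
    rw [ht]
    field_simp
    ring
  have h2 : (μ {ω | ε ≤ M N ω - M 0 ω}).toReal ≤ exp (-ε ^ 2 / (2 * N * L ^ 2)) := by
    calc (μ {ω | ε ≤ M N ω - M 0 ω}).toReal
        ≤ exp (-t * ε) * ProbabilityTheory.mgf (fun ω => M N ω - M 0 ω) μ t := key
      _ ≤ exp (-t * ε) * exp (t ^ 2 * L ^ 2 / 2) ^ N := by gcongr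
      _ = _ := hfinal
  rw [← ENNReal.ofReal_toReal (measure_ne_top μ _)]
  exact ENNReal.ofReal_le_ofReal h2

end Aux

open MeasureTheory

/-- The Azuma–Hoeffding inequality. -/
theorem stmt_6 {Ω : Type*} {m0 : MeasurableSpace Ω} {μ : Measure Ω}
    [IsProbabilityMeasure μ] (ℱ : Filtration ℕ m0) (M : ℕ → Ω → ℝ)
    (hM : Martingale M ℱ μ) (L : ℝ) (hL : 0 < L)
    (hbdd : ∀ t : ℕ, 1 ≤ t → ∀ᵐ ω ∂μ, |M t ω - M (t - 1) ω| ≤ L)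
    (N : ℕ) (hN : 0 < N) (ε : ℝ) (hε : 0 < ε) :
    μ {ω | ε ≤ |M N ω - M 0 ω|} ≤
      ENNReal.ofReal (2 * Real.exp (-ε ^ 2 / (2 * N * L ^ 2))) := by
  have hbdd' : ∀ t : ℕ, ∀ᵐ ω ∂μ, |M (t + 1) ω - M t ω| ≤ L := by
    intro t
    simpa using hbdd (t + 1) (Nat.le_add_left 1 t)
  have hbddneg : ∀ t : ℕ, ∀ᵐ ω ∂μ, |(-M) (t + 1) ω - (-M) t ω| ≤ L := by
    intro t
    filter_upwards [hbdd' t] with ω hω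
    have h : (-M) (t + 1) ω - (-M) t ω = -(M (t + 1) ω - M t ω) := by
      simp only [Pi.neg_apply]; ring
    rw [h, abs_neg]; exact hω
  have h1 := onesided ℱ M hM hL hbdd' N hN ε hε
  have h2 := onesided ℱ (-M) hM.neg hL hbddneg N hN ε hε
  have hsub : {ω | ε ≤ |M N ω - M 0 ω|} ⊆
      {ω | ε ≤ M N ω - M 0 ω} ∪ {ω | ε ≤ (-M) N ω - (-M) 0 ω} := by
    intro ω hω
    simp only [Set.mem_setOf_eq] at hω
    rcases abs_cases (M N ω - M 0 ω) with ⟨h, _⟩ | ⟨h, _⟩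
    · left; simp only [Set.mem_setOf_eq]; rwa [h] at hω
    · right
      simp only [Set.mem_union, Set.mem_setOf_eq, Pi.neg_apply]
      linarith [hω, h]
  calc μ {ω | ε ≤ |M N ω - M 0 ω|}
      ≤ μ ({ω | ε ≤ M N ω - M 0 ω} ∪ {ω | ε ≤ (-M) N ω - (-M) 0 ω}) := measure_mono hsub
    _ ≤ μ {ω | ε ≤ M N ω - M 0 ω} + μ {ω | ε ≤ (-M) N ω - (-M) 0 ω} := measure_union_le _ _
    _ ≤ ENNReal.ofReal (Real.exp (-ε ^ 2 / (2 * N * L ^ 2)))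
        + ENNReal.ofReal (Real.exp (-ε ^ 2 / (2 * N * L ^ 2))) := add_le_add h1 h2
    _ = ENNReal.ofReal (2 * Real.exp (-ε ^ 2 / (2 * N * L ^ 2))) := by
        rw [← ENNReal.ofReal_add (exp_pos _).le (exp_pos _).le]; ring_nf
end

section
/- Let T be an oriented tree with a valid edge ordering e_1, ..., e_{n-1}, let T_j be the subtree formed by the first n−1−i+j edges, let φ_j be an embedding of T_j into a digraph D, and let e = (v₁, v₂) be the next edge with v₁ ∈ V(T_j) and v₂ ∉ V(T_j). Let x ∈ V(D) \ Im(φ_j), and suppose S_v = (v, N_T⁺(v), N_T⁻(v)) is a star in T_j that is (φ_j(v₁), +, x)-absorbing under φ_j, with v ∉ {v₁} and S_v vertex-disjoint from v₁'s star. Define φ_{j+1} by φ_{j+1}(v) = x, φ_{j+1}(v₂) = φ_j(v), and φ_{j+1}(v') = φ_j(v') otherwise. Then φ_{j+1} is an injective embedding of T_{j+1} into D with Im(φ_{j+1}) = Im(φ_j) ∪ {x}. -/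
/-- A single absorbing step: using a `(φⱼ(v₁), +, x)`-absorbing star with center `v`,
the embedding `φⱼ` of the subtree `Tⱼ` can be modified — `x` takes over the role of `φⱼ(v)`
and `φⱼ(v)` is reassigned to the new leaf `v₂` — to give an injective embedding of
`Tⱼ` plus the edge `(v₁, v₂)`, with image `Im(φⱼ) ∪ {x}`. -/
theorem stmt_10 {VT VD : Type*} [DecidableEq VT]
    (T : VT → VT → Prop) (hloopT : ∀ a, ¬ T a a) (D : VD → VD → Prop)
    (Tj : VT → VT → Prop) (hsub : ∀ a b, Tj a b → T a b)
    (Vj : Set VT) (hVj : Vj = {z | ∃ y, Tj z y ∨ Tj y z})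
    (φj : VT → VD)
    (hinj : Set.InjOn φj Vj)
    (hembed : ∀ a b, Tj a b → D (φj a) (φj b))
    (v₁ v₂ : VT) (he : T v₁ v₂) (hv₁ : v₁ ∈ Vj) (hv₂ : v₂ ∉ Vj)
    (x : VD) (hx : x ∉ φj '' Vj)
    (v : VT) (hv : v ∈ Vj)
    (hstar : ∀ y, T v y ∨ T y v → y ∈ Vj)
    (hstarTj : ∀ y, (T v y ↔ Tj v y) ∧ (T y v ↔ Tj y v))
    (hdisj : Disjoint ({v} ∪ {y | T v y} ∪ {y | T y v})
                      ({v₁} ∪ {y | T v₁ y} ∪ {y | T y v₁}))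
    (habs : D (φj v₁) (φj v) ∧ (∀ y, T v y → D x (φj y)) ∧ (∀ y, T y v → D (φj y) x))
    (φ' : VT → VD)
    (hφ' : φ' = fun z => if z = v then x else if z = v₂ then φj v else φj z) :
    Set.InjOn φ' (Vj ∪ {v₂}) ∧
    (∀ a b, (Tj a b ∨ (a = v₁ ∧ b = v₂)) → D (φ' a) (φ' b)) ∧
    φ' '' (Vj ∪ {v₂}) = (φj '' Vj) ∪ {x} := by
  have hvv1 : v ≠ v₁ := by
    intro h
    exact Set.disjoint_left.mp hdisj (Or.inl (Or.inl rfl)) (Or.inl (Or.inl h))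
  have hv2v : v₂ ≠ v := fun h => hv₂ (h ▸ hv)
  have hxv : ∀ z ∈ Vj, x ≠ φj z := fun z hz h => hx ⟨z, hz, h.symm⟩
  have hne2 : ∀ z ∈ Vj, z ≠ v₂ := fun z hz h => hv₂ (h ▸ hz)
  have h1 : φ' v = x := by rw [hφ']; simp
  have h2 : φ' v₂ = φj v := by rw [hφ']; simp [hv2v]
  have h3 : ∀ z ∈ Vj, z ≠ v → φ' z = φj z := by
    intro z hz hzv
    rw [hφ']; simp [hzv, hne2 z hz]
  refine ⟨?_, ?_, ?_⟩
  · rintro a (ha | rfl) b (hb | rfl) hab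
    · by_cases hav : a = v
      · by_cases hbv : b = v
        · rw [hav, hbv]
        · rw [hav, h1, h3 b hb hbv] at hab
          exact absurd hab (hxv b hb)
      · rw [h3 a ha hav] at hab
        by_cases hbv : b = v
        · rw [hbv, h1] at hab
          exact absurd hab.symm (hxv a ha)
        · rw [h3 b hb hbv] at hab
          exact hinj ha hb hab
    · by_cases hav : a = v
      · rw [hav, h1, h2] at hab
        exact absurd hab (hxv v hv)
      · rw [h3 a ha hav, h2] at hab
        exact absurd (hinj ha hv hab) hav
    · by_cases hbv : b = v
      · rw [hbv, h1, h2] at hab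
        exact absurd hab.symm (hxv v hv)
      · rw [h2, h3 b hb hbv] at hab
        exact absurd (hinj hv hb hab).symm hbv
    · rfl
  · rintro a b (hab | ⟨rfl, rfl⟩)
    · have hTab := hsub a b hab
      have ha : a ∈ Vj := hVj ▸ ⟨b, Or.inl hab⟩
      have hb : b ∈ Vj := hVj ▸ ⟨a, Or.inr hab⟩
      by_cases hav : a = v
      · subst hav
        have hbv : b ≠ a := fun h => hloopT a (h ▸ hTab)
        rw [h1, h3 b hb hbv]
        exact habs.2.1 b hTab
      · by_cases hbv : b = v
        · subst hbv
          rw [h3 a ha hav, h1]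
          exact habs.2.2 a hTab
        · rw [h3 a ha hav, h3 b hb hbv]
          exact hembed a b hab
    · rw [h3 a hv₁ (Ne.symm hvv1), h2]
      exact habs.1
  · ext y
    simp only [Set.mem_image, Set.mem_union, Set.mem_singleton_iff]
    constructor
    · rintro ⟨z, hz | rfl, rfl⟩
      · by_cases hzv : z = v
        · subst hzv; rw [h1]; exact Or.inr rfl
        · rw [h3 z hz hzv]; exact Or.inl ⟨z, hz, rfl⟩
      · rw [h2]; exact Or.inl ⟨v, hv, rfl⟩
    · rintro (⟨z, hz, rfl⟩ | rfl)
      · by_cases hzv : z = v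
        · subst hzv; exact ⟨v₂, Or.inr rfl, h2⟩
        · exact ⟨z, Or.inl hz, h3 z hz hzv⟩
      · exact ⟨v, Or.inl hv, h1⟩
end

section
/- Let H be a collection of oriented graphs on vertex set [n]. Then Pr[∃ H ∈ H : H ⊆ D(n,p)] ≥ Pr[∃ H ∈ H : H ⊆ D*(n,p)], where D(n,p) includes each directed edge independently with probability p, and D*(n,p) includes, for each unordered pair {u,v}, both directed edges (u,v) and (v,u) together (independently over pairs) with probability p. -/
open MeasureTheory

namespace Stmt13


lemma algebra (Q11 Q10 Q01 Q00 P11 P10 P01 P00 : Prop)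
    [Decidable Q11] [Decidable Q10] [Decidable Q01] [Decidable Q00]
    [Decidable P11] [Decidable P10] [Decidable P01] [Decidable P00]
    (A B C D : ENNReal) (hBC : B = C)
    (e11 : Q11 ↔ P11) (e10 : Q10 ↔ P11) (e01 : Q01 ↔ P00) (e00 : Q00 ↔ P00)
    (h10 : P00 → P10) (h01 : P00 → P01) (h00 : P00 → P11) (hup : P10 → P11)
    (hsplit : P11 → P10 ∨ P01) :
    ((if Q11 then A else 0) + (if Q10 then B else 0)) +
      ((if Q01 then C else 0) + (if Q00 then D else 0))
    ≤ ((if P11 then A else 0) + (if P10 then B else 0)) +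
      ((if P01 then C else 0) + (if P00 then D else 0)) := by
  rw [if_congr e11 rfl rfl, if_congr e10 rfl rfl, if_congr e01 rfl rfl, if_congr e00 rfl rfl]
  by_cases hP00 : P00
  · simp [hP00, h10 hP00, h01 hP00, h00 hP00]
  · by_cases hP11 : P11
    · rcases hsplit hP11 with h | h
      · simp only [hP11, hP00, if_true, if_false, add_zero, zero_add, h]
        exact le_self_add
      · simp only [hP11, hP00, if_true, if_false, add_zero, zero_add, h, hBC]
        exact add_le_add le_self_add le_rfl
    · have hP10 : ¬ P10 := fun h => hP11 (hup h)
      simp [hP00, hP11, hP10]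



noncomputable def w (p : ℝ) (b : Bool) : ENNReal :=
  if b then ENNReal.ofReal p else ENNReal.ofReal (1 - p)

noncomputable def W {n : ℕ} (p : ℝ) (ω : Fin n × Fin n → Bool) : ENNReal :=
  ∏ i, w p (ω i)

def key {n : ℕ} (S : Finset (Fin n × Fin n)) (a b : Fin n) : Fin n × Fin n :=
  if (min a b, max a b) ∈ S then (min a b, max a b) else (a, b)

def ES {n : ℕ} (ℋ : Set (Fin n → Fin n → Prop)) (S : Finset (Fin n × Fin n)) :
    Set (Fin n × Fin n → Bool) :=
  {ω | ∃ H ∈ ℋ, ∃ φ : Fin n → Fin n, Function.Injective φ ∧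
      ∀ a b, H a b → (φ a ≠ φ b ∧ ω (key S (φ a) (φ b)) = true)}

noncomputable def sumE {n : ℕ} (p : ℝ) (ℋ : Set (Fin n → Fin n → Prop))
    (S : Finset (Fin n × Fin n)) : ENNReal :=
  ∑ ω : Fin n × Fin n → Bool, Set.indicator (ES ℋ S) (W p) ω

-- monotonicity
lemma ES_mono {n : ℕ} {ℋ : Set (Fin n → Fin n → Prop)} {S : Finset (Fin n × Fin n)}
    {ω ω' : Fin n × Fin n → Bool} (h : ∀ i, ω i = true → ω' i = true) (hω : ω ∈ ES ℋ S) :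
    ω' ∈ ES ℋ S := by
  obtain ⟨H, hH, φ, hinj, hc⟩ := hω
  exact ⟨H, hH, φ, hinj, fun a b hab => ⟨(hc a b hab).1, h _ (hc a b hab).2⟩⟩

lemma key_ne_vu {n : ℕ} {u v : Fin n} (huv : u < v) (S : Finset (Fin n × Fin n))
    {a b : Fin n} (hab : a ≠ b) : key (insert (u, v) S) a b ≠ (v, u) := by
  unfold key
  split
  · intro h
    rw [Prod.mk.injEq] at h
    have := min_lt_max.mpr hab
    rw [h.1, h.2] at this
    exact absurd (huv.trans this) (lt_irrefl _)
  · next hmem =>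
    intro h
    rw [Prod.mk.injEq] at h
    apply hmem
    obtain ⟨h1, h2⟩ := h
    simp only [h1, h2]
    rw [min_comm, max_comm, min_eq_left huv.le, max_eq_right huv.le]
    exact Finset.mem_insert_self _ _

-- E (insert (u,v) S) does not depend on the coordinate (v,u)
lemma ES_indep_vu {n : ℕ} {ℋ : Set (Fin n → Fin n → Prop)} {u v : Fin n} (huv : u < v)
    (S : Finset (Fin n × Fin n)) {ω ω' : Fin n × Fin n → Bool}
    (h : ∀ i, i ≠ (v, u) → ω i = ω' i) (hω : ω ∈ ES ℋ (insert (u, v) S)) :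
    ω' ∈ ES ℋ (insert (u, v) S) := by
  obtain ⟨H, hH, φ, hinj, hc⟩ := hω
  refine ⟨H, hH, φ, hinj, fun a b hab => ⟨(hc a b hab).1, ?_⟩⟩
  rw [← h _ (key_ne_vu huv S (hc a b hab).1)]
  exact (hc a b hab).2

-- membership in ES S and ES (insert (u,v) S) agree when ω (u,v) = ω (v,u)
lemma ES_insert_eq {n : ℕ} {ℋ : Set (Fin n → Fin n → Prop)} {u v : Fin n} (huv : u < v)
    {S : Finset (Fin n × Fin n)} (hS : (u, v) ∉ S) {ω : Fin n × Fin n → Bool}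
    (h : ω (u, v) = ω (v, u)) :
    ω ∈ ES ℋ S ↔ ω ∈ ES ℋ (insert (u, v) S) := by
  have keyval : ∀ a b : Fin n, a ≠ b →
      (ω (key S a b) = true ↔ ω (key (insert (u, v) S) a b) = true) := by
    intro a b hab
    by_cases hmm : (min a b, max a b) = (u, v)
    · rw [key, key, if_neg (by rw [hmm]; exact hS), if_pos (by rw [hmm]; exact Finset.mem_insert_self _ _), hmm]
      rw [Prod.mk.injEq] at hmm
      rcases hab.lt_or_gt with hlt | hlt
      · have h1 : a = u := by rw [← hmm.1, min_eq_left hlt.le]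
        have h2 : b = v := by rw [← hmm.2, max_eq_right hlt.le]
        rw [h1, h2]
      · have h1 : b = u := by rw [← hmm.1, min_eq_right hlt.le]
        have h2 : a = v := by rw [← hmm.2, max_eq_left hlt.le]
        rw [h1, h2, ← h]
    · rw [key, key]
      simp only [Finset.mem_insert, hmm, false_or]
  constructor
  · rintro ⟨H, hH, φ, hinj, hc⟩
    exact ⟨H, hH, φ, hinj, fun a b hab =>
      ⟨(hc a b hab).1, (keyval _ _ (hc a b hab).1).mp (hc a b hab).2⟩⟩
  · rintro ⟨H, hH, φ, hinj, hc⟩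
    exact ⟨H, hH, φ, hinj, fun a b hab =>
      ⟨(hc a b hab).1, (keyval _ _ (hc a b hab).1).mpr (hc a b hab).2⟩⟩

-- the oriented-graph splitting lemma
lemma ES_orient {n : ℕ} {ℋ : Set (Fin n → Fin n → Prop)}
    (hor : ∀ H ∈ ℋ, (∀ a, ¬ H a a) ∧ (∀ a b, H a b → ¬ H b a))
    {u v : Fin n} (huv : u < v) {S : Finset (Fin n × Fin n)} (hS : (u, v) ∉ S)
    {ω : Fin n × Fin n → Bool} (hω : ω ∈ ES ℋ S) :
    Function.update ω (v, u) false ∈ ES ℋ S ∨ Function.update ω (u, v) false ∈ ES ℋ S := by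
  classical
  obtain ⟨H, hH, φ, hinj, hc⟩ := hω
  have keyS : ∀ a b : Fin n, a ≠ b → key S (φ a) (φ b) = (u, v) → φ a = u ∧ φ b = v := by
    intro a b hab hk
    rw [key] at hk
    split at hk
    · next hmem => exact absurd (hk ▸ hmem) hS
    · rw [Prod.mk.injEq] at hk; exact hk
  have keyS' : ∀ a b : Fin n, φ a ≠ φ b → key S (φ a) (φ b) = (v, u) → φ a = v ∧ φ b = u := by
    intro a b hab hk
    rw [key] at hk
    split at hk
    · rw [Prod.mk.injEq] at hk
      have := min_lt_max.mpr hab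
      rw [hk.1, hk.2] at this
      exact absurd (huv.trans this) (lt_irrefl _)
    · rw [Prod.mk.injEq] at hk; exact hk
  by_cases hvu : ∃ a b, H a b ∧ φ a = v ∧ φ b = u
  · -- some edge uses (v,u); then no edge uses (u,v), so we may kill (u,v)
    right
    obtain ⟨a0, b0, hab0, ha0, hb0⟩ := hvu
    refine ⟨H, hH, φ, hinj, fun a b hab => ⟨(hc a b hab).1, ?_⟩⟩
    rw [Function.update_apply, if_neg, (hc a b hab).2]
    intro hk
    obtain ⟨h1, h2⟩ := keyS a b (fun h => (hor H hH).1 a (h ▸ hab)) hk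
    have : a = b0 := hinj (by rw [h1, hb0])
    have hb : b = a0 := hinj (by rw [h2, ha0])
    exact (hor H hH).2 a0 b0 hab0 (this ▸ hb ▸ hab)
  · left
    refine ⟨H, hH, φ, hinj, fun a b hab => ⟨(hc a b hab).1, ?_⟩⟩
    rw [Function.update_apply, if_neg, (hc a b hab).2]
    intro hk
    obtain ⟨h1, h2⟩ := keyS' a b (hc a b hab).1 hk
    exact hvu ⟨a, b, hab, h1, h2⟩

def build {n : ℕ} (u v : Fin n)
    (r : {i : Fin n × Fin n // i ≠ (u, v) ∧ i ≠ (v, u)} → Bool) (x y : Bool) :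
    Fin n × Fin n → Bool :=
  fun i => if h1 : i = (u, v) then x else if h2 : i = (v, u) then y else r ⟨i, h1, h2⟩

lemma build_uv {n : ℕ} (u v : Fin n) (r) (x y : Bool) : build u v r x y (u, v) = x := by
  simp [build]

lemma build_vu {n : ℕ} {u v : Fin n} (huv : u ≠ v) (r) (x y : Bool) :
    build u v r x y (v, u) = y := by
  have : ((v, u) : Fin n × Fin n) ≠ (u, v) := by simp [Prod.mk.injEq]; intro h; exact absurd h.symm huv
  simp [build, this]

lemma build_other {n : ℕ} (u v : Fin n) (r) (x y : Bool) (i : Fin n × Fin n)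
    (h1 : i ≠ (u, v)) (h2 : i ≠ (v, u)) : build u v r x y i = r ⟨i, h1, h2⟩ := by
  simp [build, h1, h2]

def eqv {n : ℕ} (u v : Fin n) (huv : u ≠ v) :
    ({i : Fin n × Fin n // i ≠ (u, v) ∧ i ≠ (v, u)} → Bool) × Bool × Bool ≃
      (Fin n × Fin n → Bool) where
  toFun z := build u v z.1 z.2.1 z.2.2
  invFun ω := (fun i => ω i, ω (u, v), ω (v, u))
  left_inv z := by
    obtain ⟨r, x, y⟩ := z
    refine Prod.ext ?_ (Prod.ext ?_ ?_)
    · funext i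
      exact build_other u v r x y i i.2.1 i.2.2
    · exact build_uv u v r x y
    · exact build_vu huv r x y
  right_inv ω := by
    funext i
    show build u v _ _ _ i = ω i
    by_cases h1 : i = (u, v)
    · rw [h1, build_uv]
    · by_cases h2 : i = (v, u)
      · rw [h2, build_vu huv]
      · rw [build_other u v _ _ _ i h1 h2]

lemma W_build {n : ℕ} (p : ℝ) {u v : Fin n} (huv : u ≠ v) (r) (x y : Bool) :
    W p (build u v r x y) =
      w p x * w p y * ∏ i : {i : Fin n × Fin n // i ≠ (u, v) ∧ i ≠ (v, u)}, w p (r i) := by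
  classical
  have hne : ((u, v) : Fin n × Fin n) ≠ (v, u) := by
    simp [Prod.mk.injEq]; intro h; exact absurd h huv
  rw [W, ← Finset.prod_sdiff (Finset.subset_univ ({(u, v), (v, u)} : Finset (Fin n × Fin n)))]
  rw [Finset.prod_pair hne, build_uv, build_vu huv]
  have : ∏ i ∈ Finset.univ \ ({(u, v), (v, u)} : Finset (Fin n × Fin n)),
      w p (build u v r x y i) = ∏ i : {i : Fin n × Fin n // i ≠ (u, v) ∧ i ≠ (v, u)}, w p (r i) := by
    rw [Finset.prod_subtype (Finset.univ \ ({(u, v), (v, u)} : Finset (Fin n × Fin n)))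
      (p := fun i => i ≠ (u, v) ∧ i ≠ (v, u)) (by intro i; simp [not_or])]
    exact Finset.prod_congr rfl fun i _ => by rw [build_other u v r x y i i.2.1 i.2.2]
  rw [this]
  ring


lemma inner {n : ℕ} (p : ℝ) (ℋ : Set (Fin n → Fin n → Prop))
    (hor : ∀ H ∈ ℋ, (∀ a, ¬ H a a) ∧ (∀ a b, H a b → ¬ H b a))
    {u v : Fin n} (huv : u < v) {S : Finset (Fin n × Fin n)} (hS : (u, v) ∉ S)
    (r : {i : Fin n × Fin n // i ≠ (u, v) ∧ i ≠ (v, u)} → Bool) :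
    ∑ x : Bool, ∑ y : Bool, Set.indicator (ES ℋ (insert (u, v) S)) (W p) (build u v r x y)
    ≤ ∑ x : Bool, ∑ y : Bool, Set.indicator (ES ℋ S) (W p) (build u v r x y) := by
  classical
  have hne : u ≠ v := huv.ne
  have hagree : ∀ x y y' : Bool, ∀ i, i ≠ (v, u) → build u v r x y i = build u v r x y' i := by
    intro x y y' i hi
    by_cases h1 : i = (u, v)
    · rw [h1, build_uv, build_uv]
    · rw [build_other u v r x y i h1 hi, build_other u v r x y' i h1 hi]
  have hmono : ∀ (x y x' y' : Bool), (x = true → x' = true) → (y = true → y' = true) →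
      ∀ i, build u v r x y i = true → build u v r x' y' i = true := by
    intro x y x' y' hx hy i hi
    by_cases h1 : i = (u, v)
    · rw [h1, build_uv] at hi ⊢; exact hx hi
    · by_cases h2 : i = (v, u)
      · rw [h2, build_vu hne] at hi ⊢; exact hy hi
      · rwa [build_other u v r x' y' i h1 h2, ← build_other u v r x y i h1 h2]
  have hdiag : ∀ x : Bool, build u v r x x ∈ ES ℋ S ↔ build u v r x x ∈ ES ℋ (insert (u, v) S) :=
    fun x => ES_insert_eq huv hS (by rw [build_uv, build_vu hne])
  have e11 : build u v r true true ∈ ES ℋ (insert (u, v) S) ↔ build u v r true true ∈ ES ℋ S :=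
    (hdiag true).symm
  have e10 : build u v r true false ∈ ES ℋ (insert (u, v) S) ↔ build u v r true true ∈ ES ℋ S := by
    rw [← e11]
    exact ⟨ES_indep_vu huv S (hagree true false true), ES_indep_vu huv S (hagree true true false)⟩
  have e00 : build u v r false false ∈ ES ℋ (insert (u, v) S) ↔ build u v r false false ∈ ES ℋ S :=
    (hdiag false).symm
  have e01 : build u v r false true ∈ ES ℋ (insert (u, v) S) ↔ build u v r false false ∈ ES ℋ S := by
    rw [← e00]
    exact ⟨ES_indep_vu huv S (hagree false true false), ES_indep_vu huv S (hagree false false true)⟩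
  have h10 : build u v r false false ∈ ES ℋ S → build u v r true false ∈ ES ℋ S :=
    ES_mono (hmono false false true false (fun _ => rfl) id)
  have h01 : build u v r false false ∈ ES ℋ S → build u v r false true ∈ ES ℋ S :=
    ES_mono (hmono false false false true id (fun _ => rfl))
  have h00 : build u v r false false ∈ ES ℋ S → build u v r true true ∈ ES ℋ S :=
    ES_mono (hmono false false true true (fun _ => rfl) (fun _ => rfl))
  have hup : build u v r true false ∈ ES ℋ S → build u v r true true ∈ ES ℋ S :=
    ES_mono (hmono true false true true id (fun _ => rfl))
  have hsplit : build u v r true true ∈ ES ℋ S →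
      build u v r true false ∈ ES ℋ S ∨ build u v r false true ∈ ES ℋ S := by
    intro h
    rcases ES_orient hor huv hS h with h' | h'
    · left
      refine ES_mono (ω := Function.update (build u v r true true) (v, u) false) ?_ h'
      intro i hi
      rcases eq_or_ne i (v, u) with h2 | h2
      · rw [h2, Function.update_self] at hi; exact absurd hi (by simp)
      · rw [Function.update_of_ne h2] at hi
        rw [← hagree true true false i h2]; exact hi
    · right
      refine ES_mono (ω := Function.update (build u v r true true) (u, v) false) ?_ h'
      intro i hi
      rcases eq_or_ne i (u, v) with h2 | h2
      · rw [h2, Function.update_self] at hi; exact absurd hi (by simp)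
      · rw [Function.update_of_ne h2] at hi
        by_cases h3 : i = (v, u)
        · rw [h3, build_vu hne]
        · rwa [build_other u v r false true i h2 h3, ← build_other u v r true true i h2 h3]
  simp only [Fintype.sum_bool, Set.indicator_apply, W_build p hne r]
  exact algebra _ _ _ _ _ _ _ _
    (w p true * w p true * ∏ i : {i : Fin n × Fin n // i ≠ (u, v) ∧ i ≠ (v, u)}, w p (r i))
    (w p true * w p false * ∏ i : {i : Fin n × Fin n // i ≠ (u, v) ∧ i ≠ (v, u)}, w p (r i))
    (w p false * w p true * ∏ i : {i : Fin n × Fin n // i ≠ (u, v) ∧ i ≠ (v, u)}, w p (r i))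
    (w p false * w p false * ∏ i : {i : Fin n × Fin n // i ≠ (u, v) ∧ i ≠ (v, u)}, w p (r i))
    (by ring) e11 e10 e01 e00 h10 h01 h00 hup hsplit

lemma step {n : ℕ} (p : ℝ) (ℋ : Set (Fin n → Fin n → Prop))
    (hor : ∀ H ∈ ℋ, (∀ a, ¬ H a a) ∧ (∀ a b, H a b → ¬ H b a))
    {u v : Fin n} (huv : u < v) {S : Finset (Fin n × Fin n)} (hS : (u, v) ∉ S) :
    sumE p ℋ (insert (u, v) S) ≤ sumE p ℋ S := by
  classical
  rw [sumE, sumE, ← Equiv.sum_comp (eqv u v huv.ne), ← Equiv.sum_comp (eqv u v huv.ne)]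
  rw [Fintype.sum_prod_type, Fintype.sum_prod_type]
  refine Finset.sum_le_sum fun r _ => ?_
  rw [Fintype.sum_prod_type, Fintype.sum_prod_type]
  exact inner p ℋ hor huv hS r

lemma sumE_le {n : ℕ} (p : ℝ) (ℋ : Set (Fin n → Fin n → Prop))
    (hor : ∀ H ∈ ℋ, (∀ a, ¬ H a a) ∧ (∀ a b, H a b → ¬ H b a))
    (T : Finset (Fin n × Fin n)) (hT : ∀ e ∈ T, e.1 < e.2) :
    sumE p ℋ T ≤ sumE p ℋ ∅ := by
  classical
  revert hT
  induction T using Finset.induction_on with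
  | empty => exact fun _ => le_rfl
  | @insert a T haT ih =>
    intro hT
    exact le_trans (step p ℋ hor (hT a (Finset.mem_insert_self a T)) haT)
      (ih fun e he => hT e (Finset.mem_insert_of_mem he))

lemma measure_fin_sum {ι : Type*} [Fintype ι] [DecidableEq ι] (μ : Measure (ι → Bool))
    (A : Set (ι → Bool)) :
    μ A = ∑ ω : ι → Bool, Set.indicator A (fun ω => μ {ω}) ω := by
  classical
  have key : A = ⋃ ω ∈ (Finset.univ.filter (· ∈ A)), {ω} := by
    ext x; simp
  rw [Finset.sum_congr rfl (fun ω _ => Set.indicator_apply A _ ω)]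
  conv_lhs => rw [key]
  rw [measure_biUnion_finset]
  · rw [Finset.sum_filter]
  · intro x hx y hy hxy
    simp [Function.onFun, hxy]
  · intro b _; exact measurableSet_singleton b

lemma measure_eq {n : ℕ} (p : ℝ) (A : Set (Fin n × Fin n → Bool)) :
    (Measure.pi fun _ : Fin n × Fin n => (ENNReal.ofReal p) • Measure.dirac true +
        (ENNReal.ofReal (1 - p)) • Measure.dirac false) A
    = ∑ ω : Fin n × Fin n → Bool, Set.indicator A (W p) ω := by
  classical
  set ν : Measure Bool := (ENNReal.ofReal p) • Measure.dirac true +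
        (ENNReal.ofReal (1 - p)) • Measure.dirac false with hν
  haveI : IsFiniteMeasure ν := by
    constructor
    simp [hν, ENNReal.add_lt_top, ENNReal.ofReal_lt_top]
  have hsingle : ∀ ω : Fin n × Fin n → Bool,
      (Measure.pi fun _ : Fin n × Fin n => ν) {ω} = W p ω := by
    intro ω
    rw [← Set.univ_pi_singleton ω, Measure.pi_pi, W]
    refine Finset.prod_congr rfl fun i _ => ?_
    cases h : ω i <;> simp [hν, w, Measure.dirac_apply', h]
  rw [measure_fin_sum]
  exact Finset.sum_congr rfl fun ω _ => by
    by_cases h : ω ∈ A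
    · rw [Set.indicator_of_mem h, Set.indicator_of_mem h, hsingle]
    · rw [Set.indicator_of_notMem h, Set.indicator_of_notMem h]

lemma ES_empty {n : ℕ} (ℋ : Set (Fin n → Fin n → Prop)) :
    ES ℋ (∅ : Finset (Fin n × Fin n)) =
    {ω | ∃ H ∈ ℋ, ∃ φ : Fin n → Fin n, Function.Injective φ ∧
      ∀ a b, H a b → (φ a ≠ φ b ∧ ω (φ a, φ b) = true)} := by
  simp [ES, key]

lemma ES_P {n : ℕ} (ℋ : Set (Fin n → Fin n → Prop)) :
    ES ℋ (Finset.univ.filter fun e : Fin n × Fin n => e.1 < e.2) =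
    {ω | ∃ H ∈ ℋ, ∃ φ : Fin n → Fin n, Function.Injective φ ∧
        ∀ a b, H a b → ((φ a < φ b ∧ ω (φ a, φ b) = true) ∨
                        (φ b < φ a ∧ ω (φ b, φ a) = true))} := by
  classical
  ext ω
  simp only [ES, Set.mem_setOf_eq]
  constructor
  · rintro ⟨H, hH, φ, hinj, hc⟩
    refine ⟨H, hH, φ, hinj, fun a b hab => ?_⟩
    obtain ⟨hne2, hval⟩ := hc a b hab
    rw [key, if_pos (by simp [Finset.mem_filter, min_lt_max.mpr hne2])] at hval
    rcases hne2.lt_or_gt with hlt | hlt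
    · left; exact ⟨hlt, by rwa [min_eq_left hlt.le, max_eq_right hlt.le] at hval⟩
    · right; exact ⟨hlt, by rwa [min_eq_right hlt.le, max_eq_left hlt.le] at hval⟩
  · rintro ⟨H, hH, φ, hinj, hc⟩
    refine ⟨H, hH, φ, hinj, fun a b hab => ?_⟩
    rcases hc a b hab with ⟨hlt, hval⟩ | ⟨hlt, hval⟩
    · refine ⟨hlt.ne, ?_⟩
      rw [key, if_pos (by simp [Finset.mem_filter, min_lt_max.mpr hlt.ne]),
        min_eq_left hlt.le, max_eq_right hlt.le]
      exact hval
    · refine ⟨hlt.ne', ?_⟩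
      rw [key, if_pos (by simp [Finset.mem_filter, min_lt_max.mpr hlt.ne']),
        min_eq_right hlt.le, max_eq_left hlt.le]
      exact hval

end Stmt13

/-- McDiarmid's coupling: for a collection `ℋ` of oriented graphs on `[n]`, the probability that
`D(n,p)` contains some member of `ℋ` is at least the probability that `D*(n,p)` does, where
`D*(n,p)` includes, for each unordered pair, both opposite directed edges jointly with
probability `p`. -/
theorem stmt_13 (n : ℕ) (p : ℝ) (hp : 0 ≤ p ∧ p ≤ 1)
    (ℋ : Set (Fin n → Fin n → Prop))
    (hor : ∀ H ∈ ℋ, (∀ a, ¬ H a a) ∧ (∀ a b, H a b → ¬ H b a)) :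
    (Measure.pi fun _ : Fin n × Fin n =>
        (ENNReal.ofReal p) • Measure.dirac true +
        (ENNReal.ofReal (1 - p)) • Measure.dirac false)
      {ω | ∃ H ∈ ℋ, ∃ φ : Fin n → Fin n, Function.Injective φ ∧
        ∀ a b, H a b → (φ a ≠ φ b ∧ ω (φ a, φ b) = true)} ≥
    (Measure.pi fun _ : Fin n × Fin n =>
        (ENNReal.ofReal p) • Measure.dirac true +
        (ENNReal.ofReal (1 - p)) • Measure.dirac false)
      {ω | ∃ H ∈ ℋ, ∃ φ : Fin n → Fin n, Function.Injective φ ∧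
        ∀ a b, H a b → ((φ a < φ b ∧ ω (φ a, φ b) = true) ∨
                        (φ b < φ a ∧ ω (φ b, φ a) = true))} := by
  classical
  rw [Stmt13.measure_eq, Stmt13.measure_eq, ← Stmt13.ES_empty ℋ, ← Stmt13.ES_P ℋ]
  show Stmt13.sumE p ℋ _ ≤ Stmt13.sumE p ℋ ∅
  exact Stmt13.sumE_le p ℋ hor _ (by simp)
end
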